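/- Let Σ_S and Σ_T be real symmetric positive definite D × D matrices, β_S, β_T ∈ ℝ^D, σ_S, σ_T > 0, α > 0, A := I_D − α Σ_T, Ω_k := (1/α) Σ_T⁻¹ (I_D − A^k), and B := (β_T − β_S)(β_T − β_S)ᵀ. Let ε be a real random variable with E[ε] = 0, E[ε²] = σ_T²; let β̂_T and β̂_S be ℝ^D-valued random vectors, mutually independent and independent of ε, with finite second moments, E[β̂_T] = β_T, Cov(β̂_T) = σ_T² Σ_T⁻¹, E[β̂_S] = β_S, Cov(β̂_S) = σ_S² Σ_S⁻¹. For x ∈ ℝ^D set y := xᵀ β_T + ε, ŷ_T := xᵀ β̂_T, β̂_k := A^k β̂_S + (I_D − A^k) β̂_T, ŷ_k := xᵀ β̂_k. Then the transfer gain ΔR_k(x) := E[(y − ŷ_T)²] − E[(y − ŷ_k)²] satisfies ΔR_k(x) = xᵀ H_k x, where H_k = σ_T² (Σ_T⁻¹ − α² Ω_k Σ_T Ω_k) − σ_S² A^k Σ_S⁻¹ A^k − A^k B A^k. -/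

import Mathlib

open Matrix MeasureTheory ProbabilityTheory

section Aux

variable {Ω : Type*} [MeasurableSpace Ω] {μ : Measure Ω}

private lemma aux_int_mul {f g : Ω → ℝ} (hf : MemLp f 2 μ) (hg : MemLp g 2 μ) :
    Integrable (fun ω => f ω * g ω) μ := by
  have h : MemLp (f • g) 1 μ := hg.smul hf (hpqr := ⟨by rw [inv_one]; exact ENNReal.inv_two_add_inv_two⟩)
  simpa [Pi.smul_apply, smul_eq_mul, Pi.mul_def] using memLp_one_iff_integrable.mp h

private lemma aux_dot_memℒp [IsFiniteMeasure μ] {D : ℕ} (f : Ω → Fin D → ℝ)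
    (hf : ∀ i, MemLp (fun ω => f ω i) 2 μ) (a : Fin D → ℝ) :
    MemLp (fun ω => a ⬝ᵥ f ω) 2 μ := by
  have := memLp_finset_sum (Finset.univ : Finset (Fin D))
    (f := fun i ω => a i * f ω i) (fun i _ => (hf i).const_mul (a i))
  simpa [dotProduct] using this

private lemma aux_quad {D : ℕ} (f g : Ω → Fin D → ℝ) (C : Matrix (Fin D) (Fin D) ℝ)
    (hInt : ∀ i j, Integrable (fun ω => f ω i * g ω j) μ)
    (hC : ∀ i j, (∫ ω, f ω i * g ω j ∂μ) = C i j) (a b : Fin D → ℝ) :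
    ∫ ω, (a ⬝ᵥ f ω) * (b ⬝ᵥ g ω) ∂μ = a ⬝ᵥ (C *ᵥ b) := by
  have hpt : ∀ ω, (a ⬝ᵥ f ω) * (b ⬝ᵥ g ω)
      = ∑ i, ∑ j, (a i * b j) * (f ω i * g ω j) := by
    intro ω
    rw [dotProduct, dotProduct, Finset.sum_mul_sum]
    exact Finset.sum_congr rfl fun i _ => Finset.sum_congr rfl fun j _ => by ring
  simp_rw [hpt]
  rw [integral_finset_sum _ (fun i _ => integrable_finset_sum _
    (fun j _ => ((hInt i j).const_mul _)))]
  have hmid : ∀ i, ∫ ω, ∑ j, (a i * b j) * (f ω i * g ω j) ∂μ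
      = ∑ j, (a i * b j) * C i j := by
    intro i
    rw [integral_finset_sum _ (fun j _ => ((hInt i j).const_mul _))]
    exact Finset.sum_congr rfl fun j _ => by rw [integral_const_mul, hC]
  simp_rw [hmid]
  simp only [dotProduct, mulVec, Finset.mul_sum]
  exact Finset.sum_congr rfl fun i _ => Finset.sum_congr rfl fun j _ => by ring

private lemma aux_eps_dot {D : ℕ} (ε : Ω → ℝ) (f : Ω → Fin D → ℝ) (a : Fin D → ℝ)
    (hInt : ∀ i, Integrable (fun ω => ε ω * f ω i) μ)
    (h0 : ∀ i, ∫ ω, ε ω * f ω i ∂μ = 0) :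
    ∫ ω, ε ω * (a ⬝ᵥ f ω) ∂μ = 0 := by
  have hpt : ∀ ω, ε ω * (a ⬝ᵥ f ω) = ∑ i, a i * (ε ω * f ω i) := by
    intro ω; rw [dotProduct, Finset.mul_sum]
    exact Finset.sum_congr rfl fun i _ => by ring
  simp_rw [hpt]
  rw [integral_finset_sum _ (fun i _ => (hInt i).const_mul _)]
  simp [integral_const_mul, h0]

private lemma aux_dot_mean0 {D : ℕ} (f : Ω → Fin D → ℝ) (a : Fin D → ℝ)
    (hInt : ∀ i, Integrable (fun ω => f ω i) μ)
    (h0 : ∀ i, ∫ ω, f ω i ∂μ = 0) :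
    ∫ ω, a ⬝ᵥ f ω ∂μ = 0 := by
  have hpt : ∀ ω, a ⬝ᵥ f ω = ∑ i, a i * f ω i := fun ω => rfl
  simp_rw [hpt]
  rw [integral_finset_sum _ (fun i _ => (hInt i).const_mul _)]
  simp [integral_const_mul, h0]

private lemma aux_vecMulVec_mulVec {D : ℕ} (b p : Fin D → ℝ) :
    (vecMulVec b b) *ᵥ p = (b ⬝ᵥ p) • b := by
  ext i
  simp only [vecMulVec_apply, mulVec, dotProduct, Pi.smul_apply, smul_eq_mul, Finset.mul_sum]
  rw [Finset.sum_mul]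
  exact Finset.sum_congr rfl fun j _ => by ring

end Aux

/-- Transfer gain of fine-tuning for the linear model: with
`A = I_D − α Σ_T`, `Ω_k = (1/α) Σ_T⁻¹ (I_D − A^k)`, `B = (β_T − β_S)(β_T − β_S)ᵀ`,
noise `ε` centered with variance `σ_T²`, and estimators `β̂_T`, `β̂_S` (mutually
independent and independent of `ε`) having the stated means and covariances, the
gain `ΔR_k(x) = E[(y − ŷ_T)²] − E[(y − ŷ_k)²]` equals `xᵀ H_k x` where
`H_k = σ_T² (Σ_T⁻¹ − α² Ω_k Σ_T Ω_k) − σ_S² A^k Σ_S⁻¹ A^k − A^k B A^k`. -/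
theorem transfer_gain_formula
    {Ω : Type*} [MeasurableSpace Ω] (μ : Measure Ω) [IsProbabilityMeasure μ]
    {D : ℕ}
    (SS ST : Matrix (Fin D) (Fin D) ℝ) (hSS : SS.PosDef) (hST : ST.PosDef)
    (βS βT : Fin D → ℝ) (σS σT : ℝ) (hσS : 0 < σS) (hσT : 0 < σT)
    (α : ℝ) (hα : 0 < α) (k : ℕ)
    (A : Matrix (Fin D) (Fin D) ℝ) (hA : A = 1 - α • ST)
    (Om : Matrix (Fin D) (Fin D) ℝ) (hOm : Om = (1 / α) • (ST⁻¹ * (1 - A ^ k)))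
    (B : Matrix (Fin D) (Fin D) ℝ) (hB : B = vecMulVec (βT - βS) (βT - βS))
    (ε : Ω → ℝ) (βhatT βhatS : Ω → Fin D → ℝ)
    (hindepST : IndepFun βhatS βhatT μ)
    (hindepεS : IndepFun ε βhatS μ)
    (hindepεT : IndepFun ε βhatT μ)
    (hL2ε : MemLp ε 2 μ)
    (hL2T : ∀ i, MemLp (fun ω => βhatT ω i) 2 μ)
    (hL2S : ∀ i, MemLp (fun ω => βhatS ω i) 2 μ)
    (hεmean : ∫ ω, ε ω ∂μ = 0)
    (hεvar : ∫ ω, (ε ω) ^ 2 ∂μ = σT ^ 2)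
    (hmeanT : ∀ i, ∫ ω, βhatT ω i ∂μ = βT i)
    (hcovT : ∀ i j, ∫ ω, (βhatT ω i - βT i) * (βhatT ω j - βT j) ∂μ
      = σT ^ 2 * (ST⁻¹ : Matrix (Fin D) (Fin D) ℝ) i j)
    (hmeanS : ∀ i, ∫ ω, βhatS ω i ∂μ = βS i)
    (hcovS : ∀ i j, ∫ ω, (βhatS ω i - βS i) * (βhatS ω j - βS j) ∂μ
      = σS ^ 2 * (SS⁻¹ : Matrix (Fin D) (Fin D) ℝ) i j)
    (x : Fin D → ℝ)
    (βhatk : Ω → Fin D → ℝ)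
    (hβhatk : ∀ ω, βhatk ω = (A ^ k) *ᵥ βhatS ω + (1 - A ^ k) *ᵥ βhatT ω)
    (Hk : Matrix (Fin D) (Fin D) ℝ)
    (hHk : Hk = σT ^ 2 • (ST⁻¹ - α ^ 2 • (Om * ST * Om))
      - σS ^ 2 • (A ^ k * SS⁻¹ * A ^ k) - A ^ k * B * A ^ k) :
    (∫ ω, ((x ⬝ᵥ βT + ε ω) - x ⬝ᵥ βhatT ω) ^ 2 ∂μ)
      - (∫ ω, ((x ⬝ᵥ βT + ε ω) - x ⬝ᵥ βhatk ω) ^ 2 ∂μ)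
      = x ⬝ᵥ (Hk *ᵥ x) := by
  haveI := hST.isUnit.invertible
  -- centered estimators
  set tc : Ω → Fin D → ℝ := fun ω i => βhatT ω i - βT i with htc
  set sc : Ω → Fin D → ℝ := fun ω i => βhatS ω i - βS i with hsc
  have hL2tc : ∀ i, MemLp (fun ω => tc ω i) 2 μ :=
    fun i => (hL2T i).sub (memLp_const (βT i))
  have hL2sc : ∀ i, MemLp (fun ω => sc ω i) 2 μ :=
    fun i => (hL2S i).sub (memLp_const (βS i))
  have hm0T : ∀ i, ∫ ω, tc ω i ∂μ = 0 := by
    intro i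
    rw [htc]
    rw [integral_sub ((hL2T i).integrable one_le_two) (integrable_const _)]
    simp [hmeanT i]
  have hm0S : ∀ i, ∫ ω, sc ω i ∂μ = 0 := by
    intro i
    rw [hsc]
    rw [integral_sub ((hL2S i).integrable one_le_two) (integrable_const _)]
    simp [hmeanS i]
  -- cross moments vanish
  have hcross_st : ∀ i j, ∫ ω, sc ω i * tc ω j ∂μ = (0 : Matrix (Fin D) (Fin D) ℝ) i j := by
    intro i j
    have hind : IndepFun (fun ω => sc ω i) (fun ω => tc ω j) μ :=
      hindepST.comp ((measurable_pi_apply i).sub measurable_const)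
        ((measurable_pi_apply j).sub measurable_const)
    have h := hind.integral_mul_eq_mul_integral ((hL2sc i).integrable one_le_two).aestronglyMeasurable
      ((hL2tc j).integrable one_le_two).aestronglyMeasurable
    have h' : ∫ ω, sc ω i * tc ω j ∂μ = (∫ ω, sc ω i ∂μ) * ∫ ω, tc ω j ∂μ := h
    rw [h', hm0S i, zero_mul]
    simp
  have hcross_εt : ∀ j, ∫ ω, ε ω * tc ω j ∂μ = 0 := by
    intro j
    have hind : IndepFun ε (fun ω => tc ω j) μ :=
      hindepεT.comp measurable_id ((measurable_pi_apply j).sub measurable_const)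
    have h := hind.integral_mul_eq_mul_integral (hL2ε.integrable one_le_two).aestronglyMeasurable
      ((hL2tc j).integrable one_le_two).aestronglyMeasurable
    have h' : ∫ ω, ε ω * tc ω j ∂μ = (∫ ω, ε ω ∂μ) * ∫ ω, tc ω j ∂μ := h
    rw [h', hεmean, zero_mul]
  have hcross_εs : ∀ j, ∫ ω, ε ω * sc ω j ∂μ = 0 := by
    intro j
    have hind : IndepFun ε (fun ω => sc ω j) μ :=
      hindepεS.comp measurable_id ((measurable_pi_apply j).sub measurable_const)
    have h := hind.integral_mul_eq_mul_integral (hL2ε.integrable one_le_two).aestronglyMeasurable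
      ((hL2sc j).integrable one_le_two).aestronglyMeasurable
    have h' : ∫ ω, ε ω * sc ω j ∂μ = (∫ ω, ε ω ∂μ) * ∫ ω, sc ω j ∂μ := h
    rw [h', hεmean, zero_mul]
  -- covariance matrices (as hypotheses for aux_quad)
  have hCT : ∀ i j, ∫ ω, tc ω i * tc ω j ∂μ = (σT ^ 2 • ST⁻¹) i j := by
    intro i j
    rw [Matrix.smul_apply, smul_eq_mul]
    exact hcovT i j
  have hCS : ∀ i j, ∫ ω, sc ω i * sc ω j ∂μ = (σS ^ 2 • SS⁻¹) i j := by
    intro i j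
    rw [Matrix.smul_apply, smul_eq_mul]
    exact hcovS i j
  have hIntTT : ∀ i j, Integrable (fun ω => tc ω i * tc ω j) μ :=
    fun i j => aux_int_mul (hL2tc i) (hL2tc j)
  have hIntSS : ∀ i j, Integrable (fun ω => sc ω i * sc ω j) μ :=
    fun i j => aux_int_mul (hL2sc i) (hL2sc j)
  have hIntST : ∀ i j, Integrable (fun ω => sc ω i * tc ω j) μ :=
    fun i j => aux_int_mul (hL2sc i) (hL2tc j)
  have hIntεT : ∀ j, Integrable (fun ω => ε ω * tc ω j) μ :=
    fun j => aux_int_mul hL2ε (hL2tc j)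
  have hIntεS : ∀ j, Integrable (fun ω => ε ω * sc ω j) μ :=
    fun j => aux_int_mul hL2ε (hL2sc j)
  -- vectors
  set p : Fin D → ℝ := x ᵥ* (A ^ k) with hp
  set q : Fin D → ℝ := x ᵥ* (1 - A ^ k) with hq
  set b : Fin D → ℝ := βT - βS with hbv
  set c : ℝ := p ⬝ᵥ b with hcv
  have hL2W : MemLp (fun ω => x ⬝ᵥ tc ω) 2 μ := aux_dot_memℒp tc hL2tc x
  have hL2U : MemLp (fun ω => p ⬝ᵥ sc ω) 2 μ := aux_dot_memℒp sc hL2sc p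
  have hL2V : MemLp (fun ω => q ⬝ᵥ tc ω) 2 μ := aux_dot_memℒp tc hL2tc q
  -- first integral
  have hI1 : (∫ ω, ((x ⬝ᵥ βT + ε ω) - x ⬝ᵥ βhatT ω) ^ 2 ∂μ)
      = σT ^ 2 + x ⬝ᵥ ((σT ^ 2 • ST⁻¹) *ᵥ x) := by
    have hpt : ∀ ω, ((x ⬝ᵥ βT + ε ω) - x ⬝ᵥ βhatT ω) ^ 2
        = ε ω * ε ω - 2 * (ε ω * (x ⬝ᵥ tc ω)) + (x ⬝ᵥ tc ω) * (x ⬝ᵥ tc ω) := by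
      intro ω
      have h1 : x ⬝ᵥ tc ω = x ⬝ᵥ βhatT ω - x ⬝ᵥ βT := by
        rw [htc, ← dotProduct_sub]
        rfl
      rw [h1]; ring
    simp_rw [hpt]
    have Iε2 : Integrable (fun ω => ε ω * ε ω) μ := aux_int_mul hL2ε hL2ε
    have IεW : Integrable (fun ω => ε ω * (x ⬝ᵥ tc ω)) μ := aux_int_mul hL2ε hL2W
    have IW2 : Integrable (fun ω => (x ⬝ᵥ tc ω) * (x ⬝ᵥ tc ω)) μ := aux_int_mul hL2W hL2W
    have I12 : Integrable (fun ω => ε ω * ε ω - 2 * (ε ω * (x ⬝ᵥ tc ω))) μ :=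
      Iε2.sub (IεW.const_mul 2)
    rw [integral_add I12 IW2, integral_sub Iε2 (IεW.const_mul 2), integral_const_mul]
    have hεε : ∫ ω, ε ω * ε ω ∂μ = σT ^ 2 := by
      rw [← hεvar]
      exact integral_congr_ae (Filter.Eventually.of_forall fun ω => by
        show ε ω * ε ω = ε ω ^ 2
        rw [sq])
    have hεW : ∫ ω, ε ω * (x ⬝ᵥ tc ω) ∂μ = 0 := aux_eps_dot ε tc x hIntεT hcross_εt
    have hWW : ∫ ω, (x ⬝ᵥ tc ω) * (x ⬝ᵥ tc ω) ∂μ = x ⬝ᵥ ((σT ^ 2 • ST⁻¹) *ᵥ x) :=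
      aux_quad tc tc (σT ^ 2 • ST⁻¹) hIntTT hCT x x
    rw [hεε, hεW, hWW]; ring
  -- second integral
  have hdecomp : ∀ ω, (x ⬝ᵥ βT + ε ω) - x ⬝ᵥ βhatk ω
      = ε ω + c - (p ⬝ᵥ sc ω) - (q ⬝ᵥ tc ω) := by
    intro ω
    have hx : x ⬝ᵥ βT = p ⬝ᵥ βT + q ⬝ᵥ βT := by
      have hpq : p + q = x := by
        rw [hp, hq, ← vecMul_add, add_sub_cancel, vecMul_one]
      rw [← hpq, add_dotProduct]
    rw [hβhatk ω, dotProduct_add, dotProduct_mulVec, dotProduct_mulVec, ← hp, ← hq, hx,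
      hcv, hbv, htc, hsc]
    have h1 : p ⬝ᵥ (βT - βS) = p ⬝ᵥ βT - p ⬝ᵥ βS := dotProduct_sub p βT βS
    have h2 : p ⬝ᵥ (fun i => βhatS ω i - βS i) = p ⬝ᵥ βhatS ω - p ⬝ᵥ βS :=
      dotProduct_sub p (βhatS ω) βS
    have h3 : q ⬝ᵥ (fun i => βhatT ω i - βT i) = q ⬝ᵥ βhatT ω - q ⬝ᵥ βT :=
      dotProduct_sub q (βhatT ω) βT
    rw [h1, h2, h3]; ring
  have hI2 : (∫ ω, ((x ⬝ᵥ βT + ε ω) - x ⬝ᵥ βhatk ω) ^ 2 ∂μ)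
      = σT ^ 2 + (c * c + p ⬝ᵥ ((σS ^ 2 • SS⁻¹) *ᵥ p) + q ⬝ᵥ ((σT ^ 2 • ST⁻¹) *ᵥ q)) := by
    have hpt : ∀ ω, ((x ⬝ᵥ βT + ε ω) - x ⬝ᵥ βhatk ω) ^ 2
        = (ε ω * ε ω + (p ⬝ᵥ sc ω) * (p ⬝ᵥ sc ω) + (q ⬝ᵥ tc ω) * (q ⬝ᵥ tc ω))
          + (c * c + 2 * (c * ε ω) + 2 * ((p ⬝ᵥ sc ω) * (q ⬝ᵥ tc ω)))
          - (2 * (ε ω * (p ⬝ᵥ sc ω)) + 2 * (ε ω * (q ⬝ᵥ tc ω)))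
          - (2 * (c * (p ⬝ᵥ sc ω)) + 2 * (c * (q ⬝ᵥ tc ω))) := by
      intro ω
      rw [hdecomp ω]; ring
    simp_rw [hpt]
    have Iε2 : Integrable (fun ω => ε ω * ε ω) μ := aux_int_mul hL2ε hL2ε
    have IU2 : Integrable (fun ω => (p ⬝ᵥ sc ω) * (p ⬝ᵥ sc ω)) μ := aux_int_mul hL2U hL2U
    have IV2 : Integrable (fun ω => (q ⬝ᵥ tc ω) * (q ⬝ᵥ tc ω)) μ := aux_int_mul hL2V hL2V
    have IUV : Integrable (fun ω => (p ⬝ᵥ sc ω) * (q ⬝ᵥ tc ω)) μ := aux_int_mul hL2U hL2V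
    have IεU : Integrable (fun ω => ε ω * (p ⬝ᵥ sc ω)) μ := aux_int_mul hL2ε hL2U
    have IεV : Integrable (fun ω => ε ω * (q ⬝ᵥ tc ω)) μ := aux_int_mul hL2ε hL2V
    have Iε : Integrable ε μ := hL2ε.integrable one_le_two
    have IU : Integrable (fun ω => p ⬝ᵥ sc ω) μ := hL2U.integrable one_le_two
    have IV : Integrable (fun ω => q ⬝ᵥ tc ω) μ := hL2V.integrable one_le_two
    have G1 : Integrable (fun ω => ε ω * ε ω + (p ⬝ᵥ sc ω) * (p ⬝ᵥ sc ω)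
        + (q ⬝ᵥ tc ω) * (q ⬝ᵥ tc ω)) μ := (Iε2.add IU2).add IV2
    have G2a : Integrable (fun ω => c * c + 2 * (c * ε ω)) μ :=
      (integrable_const (c * c)).add ((Iε.const_mul c).const_mul 2)
    have G2 : Integrable (fun ω => c * c + 2 * (c * ε ω)
        + 2 * ((p ⬝ᵥ sc ω) * (q ⬝ᵥ tc ω))) μ := G2a.add (IUV.const_mul 2)
    have G3 : Integrable (fun ω => 2 * (ε ω * (p ⬝ᵥ sc ω)) + 2 * (ε ω * (q ⬝ᵥ tc ω))) μ :=
      (IεU.const_mul 2).add (IεV.const_mul 2)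
    have G4 : Integrable (fun ω => 2 * (c * (p ⬝ᵥ sc ω)) + 2 * (c * (q ⬝ᵥ tc ω))) μ :=
      ((IU.const_mul c).const_mul 2).add ((IV.const_mul c).const_mul 2)
    have G1a : Integrable (fun ω => ε ω * ε ω + (p ⬝ᵥ sc ω) * (p ⬝ᵥ sc ω)) μ := Iε2.add IU2
    have G12 : Integrable (fun ω => (ε ω * ε ω + (p ⬝ᵥ sc ω) * (p ⬝ᵥ sc ω)
        + (q ⬝ᵥ tc ω) * (q ⬝ᵥ tc ω))
        + (c * c + 2 * (c * ε ω) + 2 * ((p ⬝ᵥ sc ω) * (q ⬝ᵥ tc ω)))) μ := G1.add G2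
    have G123 : Integrable (fun ω => (ε ω * ε ω + (p ⬝ᵥ sc ω) * (p ⬝ᵥ sc ω)
        + (q ⬝ᵥ tc ω) * (q ⬝ᵥ tc ω))
        + (c * c + 2 * (c * ε ω) + 2 * ((p ⬝ᵥ sc ω) * (q ⬝ᵥ tc ω)))
        - (2 * (ε ω * (p ⬝ᵥ sc ω)) + 2 * (ε ω * (q ⬝ᵥ tc ω)))) μ := G12.sub G3
    rw [integral_sub G123 G4, integral_sub G12 G3,
      integral_add G1 G2, integral_add G1a IV2, integral_add Iε2 IU2,
      integral_add G2a (IUV.const_mul 2),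
      integral_add (integrable_const (c * c)) ((Iε.const_mul c).const_mul 2),
      integral_add (IεU.const_mul 2) (IεV.const_mul 2),
      integral_add ((IU.const_mul c).const_mul 2) ((IV.const_mul c).const_mul 2)]
    have hεε : ∫ ω, ε ω * ε ω ∂μ = σT ^ 2 := by
      rw [← hεvar]
      exact integral_congr_ae (Filter.Eventually.of_forall fun ω => by
        show ε ω * ε ω = ε ω ^ 2
        rw [sq])
    have hUU : ∫ ω, (p ⬝ᵥ sc ω) * (p ⬝ᵥ sc ω) ∂μ = p ⬝ᵥ ((σS ^ 2 • SS⁻¹) *ᵥ p) :=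
      aux_quad sc sc (σS ^ 2 • SS⁻¹) hIntSS hCS p p
    have hVV : ∫ ω, (q ⬝ᵥ tc ω) * (q ⬝ᵥ tc ω) ∂μ = q ⬝ᵥ ((σT ^ 2 • ST⁻¹) *ᵥ q) :=
      aux_quad tc tc (σT ^ 2 • ST⁻¹) hIntTT hCT q q
    have hUV : ∫ ω, (p ⬝ᵥ sc ω) * (q ⬝ᵥ tc ω) ∂μ = 0 := by
      have := aux_quad sc tc 0 hIntST hcross_st p q
      simpa using this
    have hU0 : ∫ ω, p ⬝ᵥ sc ω ∂μ = 0 :=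
      aux_dot_mean0 sc p (fun i => (hL2sc i).integrable one_le_two) hm0S
    have hV0 : ∫ ω, q ⬝ᵥ tc ω ∂μ = 0 :=
      aux_dot_mean0 tc q (fun i => (hL2tc i).integrable one_le_two) hm0T
    rw [hεε, hUU, hVV]
    simp only [integral_const_mul]
    rw [hεmean, hUV, hU0, hV0]
    have hεU : ∫ ω, ε ω * (p ⬝ᵥ sc ω) ∂μ = 0 := aux_eps_dot ε sc p hIntεS hcross_εs
    have hεV : ∫ ω, ε ω * (q ⬝ᵥ tc ω) ∂μ = 0 := aux_eps_dot ε tc q hIntεT hcross_εt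
    rw [hεU, hεV]
    simp only [integral_const, measure_univ, probReal_univ, ENNReal.toReal_one, smul_eq_mul, one_mul]
    ring
  -- matrix algebra
  have hSTt : STᵀ = ST := (by simpa using hST.isHermitian : ST.IsSymm)
  have hAt : (A ^ k)ᵀ = A ^ k := by
    rw [transpose_pow]
    congr 1
    rw [hA]
    simp [transpose_sub, transpose_smul, hSTt]
  have hMt : (1 - A ^ k)ᵀ = 1 - A ^ k := by simp [transpose_sub, hAt]
  have hpx : (A ^ k) *ᵥ x = p := by rw [hp, ← hAt, vecMul_transpose, hAt]
  have hqx : (1 - A ^ k) *ᵥ x = q := by rw [hq, ← hMt, vecMul_transpose, hMt]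
  have hST1 : ST * ST⁻¹ = 1 := Matrix.mul_inv_of_invertible ST
  have hST2 : ST⁻¹ * ST = 1 := Matrix.inv_mul_of_invertible ST
  have hcommA : Commute A ST⁻¹ := by
    show A * ST⁻¹ = ST⁻¹ * A
    rw [hA]
    rw [Matrix.sub_mul, Matrix.mul_sub, Matrix.smul_mul, Matrix.mul_smul, hST1, hST2,
      Matrix.one_mul, Matrix.mul_one]
  have hcommM : (1 - A ^ k) * ST⁻¹ = ST⁻¹ * (1 - A ^ k) :=
    ((Commute.one_left ST⁻¹).sub_left (hcommA.pow_left k))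
  have hOmId : α ^ 2 • (Om * ST * Om) = (1 - A ^ k) * ST⁻¹ * (1 - A ^ k) := by
    rw [hOm]
    rw [show ((1 / α) • (ST⁻¹ * (1 - A ^ k))) * ST * ((1 / α) • (ST⁻¹ * (1 - A ^ k)))
        = (1 / α * (1 / α)) • ((ST⁻¹ * (1 - A ^ k)) * ST * (ST⁻¹ * (1 - A ^ k)))
      from by rw [Matrix.smul_mul, Matrix.smul_mul, Matrix.mul_smul, smul_smul]]
    rw [smul_smul]
    have hsc1 : α ^ 2 * (1 / α * (1 / α)) = 1 := by field_simp
    rw [hsc1, one_smul]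
    rw [mul_assoc (ST⁻¹ * (1 - A ^ k)) ST (ST⁻¹ * (1 - A ^ k)),
      ← mul_assoc ST ST⁻¹ (1 - A ^ k), hST1, Matrix.one_mul, ← hcommM]
  -- quadratic form identities
  have f2' : x ⬝ᵥ (((1 - A ^ k) * ST⁻¹ * (1 - A ^ k)) *ᵥ x) = q ⬝ᵥ (ST⁻¹ *ᵥ q) := by
    conv_lhs => rw [← Matrix.mulVec_mulVec, ← Matrix.mulVec_mulVec, hqx, dotProduct_mulVec]
  have f2 : q ⬝ᵥ ((σT ^ 2 • ST⁻¹) *ᵥ q)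
      = σT ^ 2 * (x ⬝ᵥ (((1 - A ^ k) * ST⁻¹ * (1 - A ^ k)) *ᵥ x)) := by
    rw [smul_mulVec, dotProduct_smul, smul_eq_mul, f2']
  have f3' : x ⬝ᵥ ((A ^ k * SS⁻¹ * A ^ k) *ᵥ x) = p ⬝ᵥ (SS⁻¹ *ᵥ p) := by
    conv_lhs => rw [← Matrix.mulVec_mulVec, ← Matrix.mulVec_mulVec, hpx, dotProduct_mulVec]
  have f3 : p ⬝ᵥ ((σS ^ 2 • SS⁻¹) *ᵥ p)
      = σS ^ 2 * (x ⬝ᵥ ((A ^ k * SS⁻¹ * A ^ k) *ᵥ x)) := by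
    rw [smul_mulVec, dotProduct_smul, smul_eq_mul, f3']
  have f4 : c * c = x ⬝ᵥ ((A ^ k * B * A ^ k) *ᵥ x) := by
    have f4' : x ⬝ᵥ ((A ^ k * B * A ^ k) *ᵥ x) = c * c := by
      conv_lhs => rw [← Matrix.mulVec_mulVec, ← Matrix.mulVec_mulVec, hpx, dotProduct_mulVec]
      rw [← hp, hB, aux_vecMulVec_mulVec, dotProduct_smul, smul_eq_mul,
        dotProduct_comm b p, ← hcv]
    exact f4'.symm
  have g1 : x ⬝ᵥ ((σT ^ 2 • ST⁻¹) *ᵥ x) = σT ^ 2 * (x ⬝ᵥ (ST⁻¹ *ᵥ x)) := by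
    rw [smul_mulVec, dotProduct_smul, smul_eq_mul]
  have f1 : x ⬝ᵥ (Hk *ᵥ x)
      = σT ^ 2 * (x ⬝ᵥ (ST⁻¹ *ᵥ x))
        - σT ^ 2 * (x ⬝ᵥ (((1 - A ^ k) * ST⁻¹ * (1 - A ^ k)) *ᵥ x))
        - σS ^ 2 * (x ⬝ᵥ ((A ^ k * SS⁻¹ * A ^ k) *ᵥ x))
        - x ⬝ᵥ ((A ^ k * B * A ^ k) *ᵥ x) := by
    rw [hHk, hOmId]
    rw [Matrix.sub_mulVec, Matrix.sub_mulVec, dotProduct_sub, dotProduct_sub,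
      smul_mulVec, smul_mulVec, dotProduct_smul, dotProduct_smul,
      Matrix.sub_mulVec, dotProduct_sub, smul_eq_mul, smul_eq_mul, mul_sub]
  rw [hI1, hI2, f2, f3, f4, g1, f1]
  ring
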